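/- (Step size 1/P guarantees descent of parallel updates.) Let F : ℝ^m → ℝ be convex and satisfy Assumption 1 with constant β > 0. Fix x ≥ 0 at which F is differentiable, indices i_1, …, i_P ∈ {1,…,m}, and update values δx_{i_j} = max{ −x_{i_j} , −(∇F(x))_{i_j}/β }. Then F( x + (1/P) Σ_{j=1}^P δx_{i_j} e^{i_j} ) ≤ (1/P) Σ_{j=1}^P F( x + δx_{i_j} e^{i_j} ) ≤ F(x) − (β/(2P)) Σ_{j=1}^P (δx_{i_j})². In particular, scaling the collective parallel update by 1/P never increases the objective. -/

import Mathlib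

open Finset

/-- `(∇F(x))_j`, the `j`-th coordinate of the gradient of `F` at `x`. -/
noncomputable def grad {m : ℕ} (F : (Fin m → ℝ) → ℝ) (x : Fin m → ℝ) (j : Fin m) : ℝ :=
  fderiv ℝ F x (Pi.single j 1)

/-- Assumption 1 with constant `β > 0`: for every feasible `x`, coordinate `j`, and `δ`
with `x + δ e^j` feasible, `F(x + δ e^j) ≤ F(x) + δ (∇F(x))_j + (β/2) δ²`. -/
def Assumption1 {m : ℕ} (β : ℝ) (F : (Fin m → ℝ) → ℝ) : Prop :=
  ∀ x : Fin m → ℝ, 0 ≤ x → ∀ j : Fin m, ∀ δ : ℝ, 0 ≤ x + Pi.single j δ →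
    F (x + Pi.single j δ) ≤ F x + δ * grad F x j + β / 2 * δ ^ 2

/-- Step size `1/P` guarantees descent of parallel coordinate updates: by convexity,
`F(x + (1/P) Σ_j δx_{i_j} e^{i_j}) ≤ (1/P) Σ_j F(x + δx_{i_j} e^{i_j})
  ≤ F(x) - (β/(2P)) Σ_j (δx_{i_j})²`,
so scaling the collective parallel update by `1/P` never increases the objective. -/
theorem parallel_step_size_inv_p_descent {m P : ℕ} (hm : 0 < m) (hP : 0 < P)
    (β : ℝ) (hβ : 0 < β) (F : (Fin m → ℝ) → ℝ)
    (hconv : ConvexOn ℝ {z : Fin m → ℝ | 0 ≤ z} F)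
    (hF : Assumption1 β F)
    (x : Fin m → ℝ) (hx : 0 ≤ x) (hdiff : DifferentiableAt ℝ F x)
    (idx : Fin P → Fin m)
    (δ : Fin P → ℝ) (hδ : ∀ j, δ j = max (-(x (idx j))) (-(grad F x (idx j)) / β)) :
    F (x + ((P : ℝ))⁻¹ • (∑ j : Fin P, Pi.single (idx j) (δ j) : Fin m → ℝ)) ≤
        (1 / (P : ℝ)) * ∑ j : Fin P, F (x + Pi.single (idx j) (δ j)) ∧
      (1 / (P : ℝ)) * (∑ j : Fin P, F (x + Pi.single (idx j) (δ j))) ≤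
        F x - β / (2 * P) * ∑ j : Fin P, (δ j) ^ 2 := by
  have hP' : (0:ℝ) < P := by exact_mod_cast hP
  set y : Fin P → (Fin m → ℝ) := fun j => x + Pi.single (idx j) (δ j) with hy
  have hxδ : ∀ j, -(x (idx j)) ≤ δ j := fun j => by rw [hδ j]; exact le_max_left _ _
  have hynn : ∀ j, 0 ≤ y j := by
    intro j k
    simp only [hy, Pi.add_apply, Pi.zero_apply]
    rcases eq_or_ne k (idx j) with h | h
    · subst h
      rw [Pi.single_eq_same]
      have := hxδ j; linarith
    · rw [Pi.single_eq_of_ne h]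
      simpa using hx k
  -- per-coordinate descent
  have hstep : ∀ j, F (y j) ≤ F (x) - β / 2 * (δ j) ^ 2 := by
    intro j
    have h1 := hF x hx (idx j) (δ j) (hynn j)
    set g := grad F x (idx j) with hg
    have hkey : δ j * g + β / 2 * (δ j) ^ 2 ≤ -(β / 2 * (δ j) ^ 2) := by
      rcases max_cases (-(x (idx j))) (-g / β) with ⟨he, hge⟩ | ⟨he, hlt⟩
      · -- δ j = -(x (idx j)), with -g/β ≤ -(x idx j)
        have hd : δ j = -(x (idx j)) := by rw [hδ j, he]
        have hd0 : δ j ≤ 0 := by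
          have hx' : 0 ≤ x (idx j) := by simpa using hx (idx j)
          rw [hd]; linarith
        have hgd : 0 ≤ g + β * δ j := by
          have h2 : -g / β ≤ δ j := hd ▸ hge
          have := (div_le_iff₀ hβ).mp h2
          nlinarith
        nlinarith [mul_nonpos_of_nonpos_of_nonneg hd0 hgd]
      · -- δ j = -g/β
        have hd : δ j = -g / β := by rw [hδ j, he]
        have h0 : δ j * (g + β * δ j) = 0 := by
          rw [hd]; field_simp; ring
        nlinarith [h0]
    linarith
  constructor
  · -- Jensen
    have hpt : x + ((P : ℝ))⁻¹ • (∑ j : Fin P, Pi.single (idx j) (δ j) : Fin m → ℝ)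
        = ∑ j : Fin P, ((P : ℝ))⁻¹ • y j := by
      simp only [hy, smul_add, Finset.sum_add_distrib, Finset.sum_const, card_univ,
        Fintype.card_fin, ← Finset.smul_sum]
      congr 1
      rw [← Nat.cast_smul_eq_nsmul ℝ, smul_smul, mul_inv_cancel₀ (ne_of_gt hP'), one_smul]
    have hj := hconv.map_sum_le (t := Finset.univ) (w := fun _ : Fin P => ((P : ℝ))⁻¹)
      (p := y) (fun i _ => by positivity)
      (by simp [mul_inv_cancel₀ (ne_of_gt hP')])
      (fun i _ => hynn i)
    rw [hpt]
    calc F (∑ j : Fin P, ((P : ℝ))⁻¹ • y j) ≤ ∑ j : Fin P, ((P : ℝ))⁻¹ * F (y j) := hj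
      _ = (1 / (P : ℝ)) * ∑ j : Fin P, F (y j) := by
          rw [Finset.mul_sum]; simp [one_div]
  · have hsum : ∑ j : Fin P, F (y j) ≤ ∑ j : Fin P, (F x - β / 2 * (δ j) ^ 2) :=
      Finset.sum_le_sum fun j _ => hstep j
    rw [Finset.sum_sub_distrib, Finset.sum_const, card_univ, Fintype.card_fin,
      ← Finset.mul_sum] at hsum
    have h2 : (1 / (P : ℝ)) * (∑ j : Fin P, F (y j))
        ≤ (1 / (P : ℝ)) * ((P : ℝ) * F x - β / 2 * ∑ j : Fin P, (δ j) ^ 2) := by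
      apply mul_le_mul_of_nonneg_left _ (by positivity)
      simpa [nsmul_eq_mul] using hsum
    calc (1 / (P : ℝ)) * (∑ j : Fin P, F (y j))
        ≤ (1 / (P : ℝ)) * ((P : ℝ) * F x - β / 2 * ∑ j : Fin P, (δ j) ^ 2) := h2
      _ = F x - β / (2 * P) * ∑ j : Fin P, (δ j) ^ 2 := by
          field_simp
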